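/- The twist polynomial of binary delta-matroids does not satisfy the Tutte relation: there do not exist polynomials x, y, p, q (with integer coefficients, say) such that for every binary delta-matroid D = (E, F) and every e ∈ E one has ∂ω_D(z) = x·∂ω_{D\e}(z) if e is a loop, ∂ω_D(z) = y·∂ω_{D/e}(z) if e is a coloop, and ∂ω_D(z) = p·∂ω_{D\e}(z) + q·∂ω_{D/e}(z) otherwise. In particular, for the binary delta-matroids D = ({a,b,c}, {∅, {b,c}}) and D' = ({a,b,c}, {∅, {a,b}, {a,c}, {b,c}}), no choice of p and q satisfies both ∂ω_D(z) = p·∂ω_{D\b}(z) + q·∂ω_{D/b}(z) and ∂ω_{D'}(z) = p·∂ω_{D'\c}(z) + q·∂ω_{D'/c}(z). -/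

import Mathlib

open scoped symmDiff

namespace SetSystem

variable {α : Type*} [DecidableEq α]

/-- The family `{F ∪ {a} : F ∪ {b} ∈ 𝓕 and F ⊆ E \ {a,b}}` used in handle sliding. -/
def slideSet (E : Finset α) (a b : α) (𝓕 : Finset (Finset α)) : Finset (Finset α) :=
  ((E \ {a, b}).powerset.filter (fun X => insert b X ∈ 𝓕)).image (fun X => insert a X)

/-- Handle sliding of `a` over `b`: `𝓕 ∆ {F ∪ {a} : F ∪ {b} ∈ 𝓕, F ⊆ E \ {a,b}}`. -/
def handleSlide (E : Finset α) (a b : α) (𝓕 : Finset (Finset α)) : Finset (Finset α) :=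
  𝓕 ∆ slideSet E a b 𝓕

/-- The family `{F ∪ {a,b} : F ∈ 𝓕 and F ⊆ E \ {a,b}}` used in exchanging handle ends. -/
def exchSet (E : Finset α) (a b : α) (𝓕 : Finset (Finset α)) : Finset (Finset α) :=
  ((E \ {a, b}).powerset.filter (fun X => X ∈ 𝓕)).image (fun X => insert a (insert b X))

/-- Exchanging handle ends of `a` and `b`: `𝓕 ∆ {F ∪ {a,b} : F ∈ 𝓕, F ⊆ E \ {a,b}}`. -/
def exchEnds (E : Finset α) (a b : α) (𝓕 : Finset (Finset α)) : Finset (Finset α) :=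
  𝓕 ∆ exchSet E a b 𝓕

/-- The twist of a set system by `A`: feasible sets become `A ∆ X` for `X` feasible. -/
def twist (A : Finset α) (𝓕 : Finset (Finset α)) : Finset (Finset α) :=
  𝓕.image (fun X => A ∆ X)

/-- `r(D_max)`: size of a largest feasible set. -/
def rmax (𝓕 : Finset (Finset α)) : ℕ := 𝓕.sup Finset.card

/-- `r(D_min)`: size of a smallest feasible set (0 for the empty family). -/
def rmin (𝓕 : Finset (Finset α)) : ℕ := WithTop.untopD 0 ((𝓕.image Finset.card).min)

/-- The width `w(D) = r(D_max) - r(D_min)`. -/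
def width (𝓕 : Finset (Finset α)) : ℕ := rmax 𝓕 - rmin 𝓕

/-- The twist polynomial `∂ω_D(z) = Σ_{A ⊆ E} z^{w(D*A)}`. -/
noncomputable def twistPoly (E : Finset α) (𝓕 : Finset (Finset α)) : Polynomial ℤ :=
  ∑ A ∈ E.powerset, Polynomial.X ^ width (twist A 𝓕)

/-- A (proper) delta-matroid: a nonempty family satisfying the symmetric exchange axiom. -/
def IsDeltaMatroid (𝓕 : Finset (Finset α)) : Prop :=
  𝓕.Nonempty ∧ ∀ X ∈ 𝓕, ∀ Y ∈ 𝓕, ∀ u ∈ X ∆ Y, ∃ v ∈ X ∆ Y, X ∆ ({u, v} : Finset α) ∈ 𝓕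

/-- A set system on ground set `E` is binary if some twist of it equals `D(C)` for a
symmetric matrix `C` over `GF(2)` indexed by `E`: the feasible sets of `D(C)` are those
`B ⊆ E` whose principal submatrix `C[B]` is nonsingular (with `C[∅]` nonsingular). -/
def IsBinary (E : Finset α) (𝓕 : Finset (Finset α)) : Prop :=
  ∃ A ⊆ E, ∃ C : α → α → ZMod 2, (∀ i j, C i j = C j i) ∧
    ∀ B : Finset α, B ∈ twist A 𝓕 ↔
      B ⊆ E ∧ (Matrix.of fun i j : ↥B => C i.1 j.1).det ≠ 0

/-- `e` is a loop: it lies in no feasible set. -/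
def IsLoop (𝓕 : Finset (Finset α)) (e : α) : Prop := ∀ X ∈ 𝓕, e ∉ X

/-- `e` is a coloop: it lies in every feasible set. -/
def IsColoop (𝓕 : Finset (Finset α)) (e : α) : Prop := ∀ X ∈ 𝓕, e ∈ X

/-- Deletion of `e` (acting on the feasible family). -/
def deleteElem (𝓕 : Finset (Finset α)) (e : α) : Finset (Finset α) :=
  if ∀ X ∈ 𝓕, e ∈ X then 𝓕.image (fun X => X.erase e)
  else 𝓕.filter (fun X => e ∉ X)

/-- Contraction of `e`: `D / e = (D * {e}) \ e`. -/
def contractElem (𝓕 : Finset (Finset α)) (e : α) : Finset (Finset α) :=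
  deleteElem (twist {e} 𝓕) e


-- Auxiliary lemmas

open Polynomial in
lemma tpD : twistPoly ({0,1,2} : Finset ℕ) ({∅,{1,2}} : Finset (Finset ℕ))
    = 4 * X ^ 2 + 4 := by
  rw [twistPoly, show ({0,1,2}:Finset ℕ).powerset
      = {∅,{0},{1},{0,1},{2},{0,2},{1,2},{0,1,2}} from by decide]
  rw [Finset.sum_insert (by decide), Finset.sum_insert (by decide),
    Finset.sum_insert (by decide), Finset.sum_insert (by decide),
    Finset.sum_insert (by decide), Finset.sum_insert (by decide),
    Finset.sum_insert (by decide), Finset.sum_singleton]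
  norm_num [show width (twist ∅ ({∅,{1,2}}:Finset (Finset ℕ))) = 2 from by decide,
    show width (twist {0} ({∅,{1,2}}:Finset (Finset ℕ))) = 2 from by decide,
    show width (twist {1} ({∅,{1,2}}:Finset (Finset ℕ))) = 0 from by decide,
    show width (twist {0,1} ({∅,{1,2}}:Finset (Finset ℕ))) = 0 from by decide,
    show width (twist {2} ({∅,{1,2}}:Finset (Finset ℕ))) = 0 from by decide,
    show width (twist {0,2} ({∅,{1,2}}:Finset (Finset ℕ))) = 0 from by decide,
    show width (twist {1,2} ({∅,{1,2}}:Finset (Finset ℕ))) = 2 from by decide,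
    show width (twist {0,1,2} ({∅,{1,2}}:Finset (Finset ℕ))) = 2 from by decide]
  ring

open Polynomial in
lemma tpD' : twistPoly ({0,1,2} : Finset ℕ) ({∅,{0,1},{0,2},{1,2}} : Finset (Finset ℕ))
    = 8 * X ^ 2 := by
  rw [twistPoly, show ({0,1,2}:Finset ℕ).powerset
      = {∅,{0},{1},{0,1},{2},{0,2},{1,2},{0,1,2}} from by decide]
  rw [Finset.sum_insert (by decide), Finset.sum_insert (by decide),
    Finset.sum_insert (by decide), Finset.sum_insert (by decide),
    Finset.sum_insert (by decide), Finset.sum_insert (by decide),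
    Finset.sum_insert (by decide), Finset.sum_singleton]
  norm_num [show width (twist ∅ ({∅,{0,1},{0,2},{1,2}}:Finset (Finset ℕ))) = 2 from by decide,
    show width (twist {0} ({∅,{0,1},{0,2},{1,2}}:Finset (Finset ℕ))) = 2 from by decide,
    show width (twist {1} ({∅,{0,1},{0,2},{1,2}}:Finset (Finset ℕ))) = 2 from by decide,
    show width (twist {0,1} ({∅,{0,1},{0,2},{1,2}}:Finset (Finset ℕ))) = 2 from by decide,
    show width (twist {2} ({∅,{0,1},{0,2},{1,2}}:Finset (Finset ℕ))) = 2 from by decide,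
    show width (twist {0,2} ({∅,{0,1},{0,2},{1,2}}:Finset (Finset ℕ))) = 2 from by decide,
    show width (twist {1,2} ({∅,{0,1},{0,2},{1,2}}:Finset (Finset ℕ))) = 2 from by decide,
    show width (twist {0,1,2} ({∅,{0,1},{0,2},{1,2}}:Finset (Finset ℕ))) = 2 from by decide]
  ring

open Polynomial in
lemma tpDdel : twistPoly ({0,2} : Finset ℕ) ({∅} : Finset (Finset ℕ)) = 4 := by
  rw [twistPoly, show ({0,2}:Finset ℕ).powerset = {∅,{0},{2},{0,2}} from by decide]
  rw [Finset.sum_insert (by decide), Finset.sum_insert (by decide),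
    Finset.sum_insert (by decide), Finset.sum_singleton]
  norm_num [show width (twist ∅ ({∅}:Finset (Finset ℕ))) = 0 from by decide,
    show width (twist {0} ({∅}:Finset (Finset ℕ))) = 0 from by decide,
    show width (twist {2} ({∅}:Finset (Finset ℕ))) = 0 from by decide,
    show width (twist {0,2} ({∅}:Finset (Finset ℕ))) = 0 from by decide]

open Polynomial in
lemma tpDcon : twistPoly ({0,2} : Finset ℕ) ({{2}} : Finset (Finset ℕ)) = 4 := by
  rw [twistPoly, show ({0,2}:Finset ℕ).powerset = {∅,{0},{2},{0,2}} from by decide]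
  rw [Finset.sum_insert (by decide), Finset.sum_insert (by decide),
    Finset.sum_insert (by decide), Finset.sum_singleton]
  norm_num [show width (twist ∅ ({{2}}:Finset (Finset ℕ))) = 0 from by decide,
    show width (twist {0} ({{2}}:Finset (Finset ℕ))) = 0 from by decide,
    show width (twist {2} ({{2}}:Finset (Finset ℕ))) = 0 from by decide,
    show width (twist {0,2} ({{2}}:Finset (Finset ℕ))) = 0 from by decide]

open Polynomial in
lemma tpD'del : twistPoly ({0,1} : Finset ℕ) ({∅,{0,1}} : Finset (Finset ℕ))
    = 2 * X ^ 2 + 2 := by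
  rw [twistPoly, show ({0,1}:Finset ℕ).powerset = {∅,{0},{1},{0,1}} from by decide]
  rw [Finset.sum_insert (by decide), Finset.sum_insert (by decide),
    Finset.sum_insert (by decide), Finset.sum_singleton]
  norm_num [show width (twist ∅ ({∅,{0,1}}:Finset (Finset ℕ))) = 2 from by decide,
    show width (twist {0} ({∅,{0,1}}:Finset (Finset ℕ))) = 0 from by decide,
    show width (twist {1} ({∅,{0,1}}:Finset (Finset ℕ))) = 0 from by decide,
    show width (twist {0,1} ({∅,{0,1}}:Finset (Finset ℕ))) = 2 from by decide]
  ring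

open Polynomial in
lemma tpD'con : twistPoly ({0,1} : Finset ℕ) ({{0},{1}} : Finset (Finset ℕ))
    = 2 * X ^ 2 + 2 := by
  rw [twistPoly, show ({0,1}:Finset ℕ).powerset = {∅,{0},{1},{0,1}} from by decide]
  rw [Finset.sum_insert (by decide), Finset.sum_insert (by decide),
    Finset.sum_insert (by decide), Finset.sum_singleton]
  norm_num [show width (twist ∅ ({{0},{1}}:Finset (Finset ℕ))) = 0 from by decide,
    show width (twist {0} ({{0},{1}}:Finset (Finset ℕ))) = 2 from by decide,
    show width (twist {1} ({{0},{1}}:Finset (Finset ℕ))) = 2 from by decide,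
    show width (twist {0,1} ({{0},{1}}:Finset (Finset ℕ))) = 0 from by decide]
  ring

lemma part2 : ∀ p q : Polynomial ℤ,
      ¬ (twistPoly ({0, 1, 2} : Finset ℕ) ({∅, {1, 2}} : Finset (Finset ℕ))
            = p * twistPoly (({0, 1, 2} : Finset ℕ).erase 1)
                (deleteElem ({∅, {1, 2}} : Finset (Finset ℕ)) 1)
              + q * twistPoly (({0, 1, 2} : Finset ℕ).erase 1)
                (contractElem ({∅, {1, 2}} : Finset (Finset ℕ)) 1) ∧
          twistPoly ({0, 1, 2} : Finset ℕ) ({∅, {0, 1}, {0, 2}, {1, 2}} : Finset (Finset ℕ))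
            = p * twistPoly (({0, 1, 2} : Finset ℕ).erase 2)
                (deleteElem ({∅, {0, 1}, {0, 2}, {1, 2}} : Finset (Finset ℕ)) 2)
              + q * twistPoly (({0, 1, 2} : Finset ℕ).erase 2)
                (contractElem ({∅, {0, 1}, {0, 2}, {1, 2}} : Finset (Finset ℕ)) 2)) := by
  rintro p q ⟨h1, h2⟩
  rw [show (({0,1,2}:Finset ℕ)).erase 1 = {0,2} from by decide,
    show deleteElem ({∅,{1,2}} : Finset (Finset ℕ)) 1 = ({∅} : Finset (Finset ℕ)) from by decide,
    show contractElem ({∅,{1,2}} : Finset (Finset ℕ)) 1 = ({{2}} : Finset (Finset ℕ)) from by decide,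
    tpD, tpDdel, tpDcon] at h1
  rw [show (({0,1,2}:Finset ℕ)).erase 2 = {0,1} from by decide,
    show deleteElem ({∅,{0,1},{0,2},{1,2}} : Finset (Finset ℕ)) 2
      = ({∅,{0,1}} : Finset (Finset ℕ)) from by decide,
    show contractElem ({∅,{0,1},{0,2},{1,2}} : Finset (Finset ℕ)) 2
      = ({{0},{1}} : Finset (Finset ℕ)) from by decide,
    tpD', tpD'del, tpD'con] at h2
  have key : (2 * Polynomial.X ^ 2 + 2) * (4 * Polynomial.X ^ 2 + 4)
      = 4 * (8 * Polynomial.X ^ 2 : Polynomial ℤ) := by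
    rw [h1, h2]; ring
  have := congrArg (Polynomial.eval 0) key
  simp at this

def C1 : ℕ → ℕ → ZMod 2 := fun i j => if (i = 1 ∧ j = 2) ∨ (i = 2 ∧ j = 1) then 1 else 0

def C2 : ℕ → ℕ → ZMod 2 := fun i j => if i = j then 0 else 1

lemma binD : IsBinary ({0,1,2} : Finset ℕ) ({∅,{1,2}} : Finset (Finset ℕ)) := by
  refine ⟨∅, by decide, C1, ?_, ?_⟩
  · intro i j
    unfold C1
    split_ifs with h1 h2 <;> first | rfl | (exfalso; tauto)
  · intro B
    constructor
    · intro h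
      rw [show twist ∅ ({∅,{1,2}} : Finset (Finset ℕ)) = ({∅,{1,2}} : Finset (Finset ℕ))
        from by decide, Finset.mem_insert, Finset.mem_singleton] at h
      rcases h with rfl | rfl
      · exact ⟨by decide, by decide⟩
      · exact ⟨by decide, by decide⟩
    · rintro ⟨hB, hdet⟩
      have hp : B ∈ ({0,1,2} : Finset ℕ).powerset := Finset.mem_powerset.2 hB
      rw [show ({0,1,2}:Finset ℕ).powerset
        = {∅,{0},{1},{0,1},{2},{0,2},{1,2},{0,1,2}} from by decide] at hp
      simp only [Finset.mem_insert, Finset.mem_singleton] at hp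
      rcases hp with rfl|rfl|rfl|rfl|rfl|rfl|rfl|rfl <;> revert hdet <;> decide

lemma binD' : IsBinary ({0,1,2} : Finset ℕ) ({∅,{0,1},{0,2},{1,2}} : Finset (Finset ℕ)) := by
  refine ⟨∅, by decide, C2, ?_, ?_⟩
  · intro i j
    unfold C2
    split_ifs with h1 h2 <;> first | rfl | (exfalso; omega)
  · intro B
    constructor
    · intro h
      rw [show twist ∅ ({∅,{0,1},{0,2},{1,2}} : Finset (Finset ℕ))
        = ({∅,{0,1},{0,2},{1,2}} : Finset (Finset ℕ)) from by decide,
        Finset.mem_insert, Finset.mem_insert, Finset.mem_insert, Finset.mem_singleton] at h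
      rcases h with rfl | rfl | rfl | rfl
      · exact ⟨by decide, by decide⟩
      · exact ⟨by decide, by decide⟩
      · exact ⟨by decide, by decide⟩
      · exact ⟨by decide, by decide⟩
    · rintro ⟨hB, hdet⟩
      have hp : B ∈ ({0,1,2} : Finset ℕ).powerset := Finset.mem_powerset.2 hB
      rw [show ({0,1,2}:Finset ℕ).powerset
        = {∅,{0},{1},{0,1},{2},{0,2},{1,2},{0,1,2}} from by decide] at hp
      simp only [Finset.mem_insert, Finset.mem_singleton] at hp
      rcases hp with rfl|rfl|rfl|rfl|rfl|rfl|rfl|rfl <;> revert hdet <;> decide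

/-- The twist polynomial of binary delta-matroids does not satisfy the Tutte
relation; in particular no `p, q` work simultaneously for `D = ({a,b,c}, {∅,{b,c}})` at `b`
and `D' = ({a,b,c}, {∅,{a,b},{a,c},{b,c}})` at `c` (here realized over `ℕ` with
`a = 0`, `b = 1`, `c = 2`). -/
theorem twistPoly_not_Tutte :
    (¬ ∃ x y p q : Polynomial ℤ,
      ∀ (E : Finset ℕ) (𝓕 : Finset (Finset ℕ)), (∀ X ∈ 𝓕, X ⊆ E) →
        IsDeltaMatroid 𝓕 → IsBinary E 𝓕 → ∀ e ∈ E,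
          (IsLoop 𝓕 e →
            twistPoly E 𝓕 = x * twistPoly (E.erase e) (deleteElem 𝓕 e)) ∧
          (IsColoop 𝓕 e →
            twistPoly E 𝓕 = y * twistPoly (E.erase e) (contractElem 𝓕 e)) ∧
          (¬ IsLoop 𝓕 e → ¬ IsColoop 𝓕 e →
            twistPoly E 𝓕 = p * twistPoly (E.erase e) (deleteElem 𝓕 e)
              + q * twistPoly (E.erase e) (contractElem 𝓕 e))) ∧
    (∀ p q : Polynomial ℤ,
      ¬ (twistPoly ({0, 1, 2} : Finset ℕ) ({∅, {1, 2}} : Finset (Finset ℕ))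
            = p * twistPoly (({0, 1, 2} : Finset ℕ).erase 1)
                (deleteElem ({∅, {1, 2}} : Finset (Finset ℕ)) 1)
              + q * twistPoly (({0, 1, 2} : Finset ℕ).erase 1)
                (contractElem ({∅, {1, 2}} : Finset (Finset ℕ)) 1) ∧
          twistPoly ({0, 1, 2} : Finset ℕ) ({∅, {0, 1}, {0, 2}, {1, 2}} : Finset (Finset ℕ))
            = p * twistPoly (({0, 1, 2} : Finset ℕ).erase 2)
                (deleteElem ({∅, {0, 1}, {0, 2}, {1, 2}} : Finset (Finset ℕ)) 2)
              + q * twistPoly (({0, 1, 2} : Finset ℕ).erase 2)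
                (contractElem ({∅, {0, 1}, {0, 2}, {1, 2}} : Finset (Finset ℕ)) 2))) := by
  constructor
  · rintro ⟨x, y, p, q, h⟩
    have h1 := (h {0,1,2} {∅,{1,2}} (by decide) (by constructor <;> decide) binD 1
      (by decide)).2.2 (by unfold IsLoop; decide) (by unfold IsColoop; decide)
    have h2 := (h {0,1,2} {∅,{0,1},{0,2},{1,2}} (by decide) (by constructor <;> decide) binD' 2
      (by decide)).2.2 (by unfold IsLoop; decide) (by unfold IsColoop; decide)
    exact part2 p q ⟨h1, h2⟩
  · exact part2


end SetSystem
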